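/- arXiv:1510.06298 — 4 statements merged into one kernel-verified Lean document; each statement's English description precedes it below -/
import Mathlib

section
/- Let D = {a,b,c} and let s : D² → D be the idempotent semilattice-without-unit operation mapping every pair (x,y) with x ≠ y to c and (x,x) to x. If a relation ρ ⊆ D^n (n ≥ 2) has an essential tuple of the form (c,c,x_3,…,x_n), then ρ is not preserved by s. -/
/-- if ρ has an essential tuple of the form (c,c,x₃,…,xₙ) then ρ
is not preserved by the semilattice operation s. -/
theorem essential_cc_not_preserved {D : Type*} (a b c : D)
    (hab : a ≠ b) (hac : a ≠ c) (hbc : b ≠ c)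
    (hD : ∀ x : D, x = a ∨ x = b ∨ x = c)
    (s : D → D → D) (hs1 : ∀ x, s x x = x) (hs2 : ∀ x y, x ≠ y → s x y = c)
    {n : ℕ} (hn : 2 ≤ n) (ρ : (Fin n → D) → Prop)
    (x : Fin n → D) (hx0 : x ⟨0, by omega⟩ = c) (hx1 : x ⟨1, by omega⟩ = c)
    (hxρ : ¬ ρ x) (hess : ∀ i : Fin n, ∃ d : D, ρ (Function.update x i d)) :
    ¬ ∀ u v : Fin n → D, ρ u → ρ v → ρ (fun i => s (u i) (v i)) := by
  intro hpres
  obtain ⟨d0, h0⟩ := hess ⟨0, by omega⟩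
  obtain ⟨d1, h1⟩ := hess ⟨1, by omega⟩
  have key : (fun i => s (Function.update x ⟨0, by omega⟩ d0 i)
      (Function.update x ⟨1, by omega⟩ d1 i)) = x := by
    funext i
    by_cases h0i : i = ⟨0, by omega⟩
    · subst h0i
      rw [Function.update_self, Function.update_of_ne (by simp [Fin.ext_iff]), hx0]
      rcases eq_or_ne d0 c with h | h
      · rw [h, hs1]
      · rw [hs2 _ _ h]
    · by_cases h1i : i = ⟨1, by omega⟩
      · subst h1i
        rw [Function.update_self, Function.update_of_ne (by simp [Fin.ext_iff]), hx1]
        rcases eq_or_ne d1 c with h | h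
        · rw [h, hs1]
        · rcases eq_or_ne c d1 with h' | h'
          · exact (h h'.symm).elim
          · rw [hs2 _ _ h']
      · rw [Function.update_of_ne h0i, Function.update_of_ne h1i, hs1]
  exact hxρ (key ▸ hpres _ _ h0 h1)
end

section
/- Let D = {a,b,c}, let s be the binary operation with s(x,x)=x and s(x,y)=c for x≠y, and let t be the 4-ary idempotent operation on D mapping (a,b,a,b)↦b, (a,b,b,a)↦a, (c,b,b,c)↦b, (a,c,a,c)↦a, (x,x,x,x)↦x, and all other tuples to c. Then every m-ary term operation g of the algebra (D; s, t) has a coordinate i such that g(x_1,…,x_m) ∈ {a,c} whenever x_i ∈ {a,c}, and a coordinate j such that g(x_1,…,x_m) ∈ {b,c} whenever x_j ∈ {b,c}. -/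
/-- Term operations of the algebra (D; s, t): generated from projections by
composition with s and t. -/
inductive IsTerm {D : Type*} (s : D → D → D) (t : D → D → D → D → D) :
    {m : ℕ} → ((Fin m → D) → D) → Prop
  | proj {m : ℕ} (i : Fin m) : IsTerm s t (fun x => x i)
  | comp_s {m : ℕ} {f g : (Fin m → D) → D} :
      IsTerm s t f → IsTerm s t g → IsTerm s t (fun x => s (f x) (g x))
  | comp_t {m : ℕ} {f1 f2 f3 f4 : (Fin m → D) → D} :
      IsTerm s t f1 → IsTerm s t f2 → IsTerm s t f3 → IsTerm s t f4 →
      IsTerm s t (fun x => t (f1 x) (f2 x) (f3 x) (f4 x))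

/-- every term operation of (D; s, t) is {a,c}{b,c}-projective,
with possibly different witnessing coordinates for the two halves. -/
theorem term_ops_projective {D : Type*} (a b c : D)
    (hab : a ≠ b) (hac : a ≠ c) (hbc : b ≠ c)
    (hD : ∀ x : D, x = a ∨ x = b ∨ x = c)
    (s : D → D → D) (hs1 : ∀ x, s x x = x) (hs2 : ∀ x y, x ≠ y → s x y = c)
    (t : D → D → D → D → D)
    (ht0 : ∀ x, t x x x x = x)
    (ht1 : t a b a b = b) (ht2 : t a b b a = a)
    (ht3 : t c b b c = b) (ht4 : t a c a c = a)
    (ht5 : ∀ w x y z : D, ¬ (w = x ∧ x = y ∧ y = z) →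
      ¬ (w = a ∧ x = b ∧ y = a ∧ z = b) → ¬ (w = a ∧ x = b ∧ y = b ∧ z = a) →
      ¬ (w = c ∧ x = b ∧ y = b ∧ z = c) → ¬ (w = a ∧ x = c ∧ y = a ∧ z = c) →
      t w x y z = c)
    {m : ℕ} (g : (Fin m → D) → D) (hg : IsTerm s t g) :
    (∃ i : Fin m, ∀ x : Fin m → D, (x i = a ∨ x i = c) → (g x = a ∨ g x = c)) ∧
    (∃ j : Fin m, ∀ x : Fin m → D, (x j = b ∨ x j = c) → (g x = b ∨ g x = c)) := by
  -- key facts about t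
  have key_ac : ∀ w x y z : D, x ≠ b → (t w x y z = a ∨ t w x y z = c) := by
    intro w x y z hx
    by_cases h0 : w = x ∧ x = y ∧ y = z
    · obtain ⟨rfl, rfl, rfl⟩ := h0
      rw [ht0]
      rcases hD w with h | h | h
      · exact Or.inl h
      · exact absurd h hx
      · exact Or.inr h
    · by_cases p1 : w = a ∧ x = b ∧ y = a ∧ z = b
      · exact absurd p1.2.1 hx
      · by_cases p2 : w = a ∧ x = b ∧ y = b ∧ z = a
        · exact absurd p2.2.1 hx
        · by_cases p3 : w = c ∧ x = b ∧ y = b ∧ z = c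
          · exact absurd p3.2.1 hx
          · by_cases p4 : w = a ∧ x = c ∧ y = a ∧ z = c
            · obtain ⟨rfl, rfl, rfl, rfl⟩ := p4
              rw [ht4]; exact Or.inl rfl
            · exact Or.inr (ht5 w x y z h0 p1 p2 p3 p4)
  have key_bc : ∀ w x y z : D, w ≠ a → (t w x y z = b ∨ t w x y z = c) := by
    intro w x y z hw
    by_cases h0 : w = x ∧ x = y ∧ y = z
    · obtain ⟨rfl, rfl, rfl⟩ := h0
      rw [ht0]
      rcases hD w with h | h | h
      · exact absurd h hw
      · exact Or.inl h
      · exact Or.inr h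
    · by_cases p1 : w = a ∧ x = b ∧ y = a ∧ z = b
      · exact absurd p1.1 hw
      · by_cases p2 : w = a ∧ x = b ∧ y = b ∧ z = a
        · exact absurd p2.1 hw
        · by_cases p3 : w = c ∧ x = b ∧ y = b ∧ z = c
          · obtain ⟨rfl, rfl, rfl, rfl⟩ := p3
            rw [ht3]; exact Or.inl rfl
          · by_cases p4 : w = a ∧ x = c ∧ y = a ∧ z = c
            · exact absurd p4.1 hw
            · exact Or.inr (ht5 w x y z h0 p1 p2 p3 p4)
  induction hg with
  | proj i => exact ⟨⟨i, fun x h => h⟩, ⟨i, fun x h => h⟩⟩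
  | @comp_s f g hf hg ihf ihg =>
      obtain ⟨⟨i, hi⟩, ⟨j, hj⟩⟩ := ihf
      refine ⟨⟨i, fun x hx => ?_⟩, ⟨j, fun x hx => ?_⟩⟩
      · by_cases h : f x = g x
        · simp only []
          rw [← h, hs1]
          exact hi x hx
        · exact Or.inr (hs2 _ _ h)
      · by_cases h : f x = g x
        · simp only []
          rw [← h, hs1]
          exact hj x hx
        · exact Or.inr (hs2 _ _ h)
  | @comp_t f1 f2 f3 f4 h1 h2 h3 h4 ih1 ih2 ih3 ih4 =>
      obtain ⟨⟨i2, hi2⟩, _⟩ := ih2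
      obtain ⟨_, ⟨j1, hj1⟩⟩ := ih1
      refine ⟨⟨i2, fun x hx => ?_⟩, ⟨j1, fun x hx => ?_⟩⟩
      · have : f2 x ≠ b := by
          rcases hi2 x hx with h | h
          · rw [h]; exact hab
          · rw [h]; exact fun e => hbc e.symm
        exact key_ac _ _ _ _ this
      · have : f1 x ≠ a := by
          rcases hj1 x hx with h | h
          · rw [h]; exact fun e => hab e.symm
          · rw [h]; exact fun e => hac e.symm
        exact key_bc _ _ _ _ this
end

section
/- Let D = {a,b,c}, s the binary operation with s(x,x)=x and s(x,y)=c for x≠y, and t the 4-ary idempotent operation mapping (a,b,a,b)↦b, (a,b,b,a)↦a, (c,b,b,c)↦b, (a,c,a,c)↦a, diagonal tuples to their value, and all other tuples to c. Then every m-ary term operation g of (D; s, t) has a coordinate i such that g(x_1,…,x_m) = c whenever x_i = c. -/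
/-- every term operation of (D; s, t) has a coordinate i such that
g(x) = c whenever x_i = c. -/
theorem term_ops_c_coordinate {D : Type*} (a b c : D)
    (hab : a ≠ b) (hac : a ≠ c) (hbc : b ≠ c)
    (hD : ∀ x : D, x = a ∨ x = b ∨ x = c)
    (s : D → D → D) (hs1 : ∀ x, s x x = x) (hs2 : ∀ x y, x ≠ y → s x y = c)
    (t : D → D → D → D → D)
    (ht0 : ∀ x, t x x x x = x)
    (ht1 : t a b a b = b) (ht2 : t a b b a = a)
    (ht3 : t c b b c = b) (ht4 : t a c a c = a)
    (ht5 : ∀ w x y z : D, ¬ (w = x ∧ x = y ∧ y = z) →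
      ¬ (w = a ∧ x = b ∧ y = a ∧ z = b) → ¬ (w = a ∧ x = b ∧ y = b ∧ z = a) →
      ¬ (w = c ∧ x = b ∧ y = b ∧ z = c) → ¬ (w = a ∧ x = c ∧ y = a ∧ z = c) →
      t w x y z = c)
    {m : ℕ} (g : (Fin m → D) → D) (hg : IsTerm s t g) :
    ∃ i : Fin m, ∀ x : Fin m → D, x i = c → g x = c := by
  have hsc : ∀ v, s c v = c := by
    intro v
    rcases eq_or_ne c v with h | h
    · rw [← h]; exact hs1 c
    · exact hs2 c v h
  have htc : ∀ u v z, t u v c z = c := by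
    intro u v z
    by_cases h : u = c ∧ v = c ∧ z = c
    · obtain ⟨h1, h2, h3⟩ := h
      rw [h1, h2, h3]; exact ht0 c
    · apply ht5
      · rintro ⟨h1, h2, h3⟩
        exact h ⟨h1.trans h2, h2, h3.symm⟩
      · rintro ⟨-, -, h3, -⟩; exact hac h3.symm
      · rintro ⟨-, -, h3, -⟩; exact hbc h3.symm
      · rintro ⟨-, -, h3, -⟩; exact hbc h3.symm
      · rintro ⟨-, -, h3, -⟩; exact hac h3.symm
  induction hg with
  | proj i => exact ⟨i, fun x hx => hx⟩
  | comp_s hf hg' ihf ihg =>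
      obtain ⟨i, hi⟩ := ihf
      exact ⟨i, fun x hx => by beta_reduce; rw [hi x hx]; exact hsc _⟩
  | comp_t h1 h2 h3 h4 ih1 ih2 ih3 ih4 =>
      obtain ⟨i, hi⟩ := ih3
      exact ⟨i, fun x hx => by beta_reduce; rw [hi x hx]; exact htc _ _ _⟩
end

section
/- Let D = {a,b,c} and let r be Chen's 4-ary idempotent operation: r(a,b,b,b)=b, r(b,a,b,b)=b, r(a,a,a,b)=a, r(a,a,b,a)=a, r(x,x,x,x)=x, and r equals c on all other tuples. Then r is not {a,c}{b,c}-projective on the set of its listed tuples: for every coordinate i ∈ {1,2,3,4} there exists a tuple (x_1,x_2,x_3,x_4) ∈ {a,b}⁴ with x_i ∈ {a,c} but r(x_1,x_2,x_3,x_4) ∉ {a,c}, or x_i ∈ {b,c} but r(x_1,x_2,x_3,x_4) ∉ {b,c}. -/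
/-- Chen's operation r is not {a,c}{b,c}-projective at any
coordinate, witnessed by tuples over {a,b}. -/
theorem chen_r_not_projective {D : Type*} (a b c : D)
    (hab : a ≠ b) (hac : a ≠ c) (hbc : b ≠ c)
    (hD : ∀ x : D, x = a ∨ x = b ∨ x = c)
    (r : D → D → D → D → D)
    (hr0 : ∀ x, r x x x x = x)
    (hr1 : r a b b b = b) (hr2 : r b a b b = b)
    (hr3 : r a a a b = a) (hr4 : r a a b a = a)
    (hr5 : ∀ w x y z : D, ¬ (w = x ∧ x = y ∧ y = z) →
      ¬ (w = a ∧ x = b ∧ y = b ∧ z = b) → ¬ (w = b ∧ x = a ∧ y = b ∧ z = b) →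
      ¬ (w = a ∧ x = a ∧ y = a ∧ z = b) → ¬ (w = a ∧ x = a ∧ y = b ∧ z = a) →
      r w x y z = c) :
    ∀ i : Fin 4, ∃ x : Fin 4 → D, (∀ j : Fin 4, x j = a ∨ x j = b) ∧
      (((x i = a ∨ x i = c) ∧ ¬ (r (x 0) (x 1) (x 2) (x 3) = a ∨
          r (x 0) (x 1) (x 2) (x 3) = c)) ∨
       ((x i = b ∨ x i = c) ∧ ¬ (r (x 0) (x 1) (x 2) (x 3) = b ∨
          r (x 0) (x 1) (x 2) (x 3) = c))) := by
  intro i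
  fin_cases i
  · refine ⟨![a,b,b,b], fun j => by fin_cases j <;> simp, Or.inl ⟨Or.inl rfl, ?_⟩⟩
    simp only [Matrix.cons_val_zero, Matrix.cons_val_one, Matrix.head_cons, Matrix.cons_val_two, Matrix.cons_val_three, Matrix.tail_cons, hr1]
    rintro (h | h)
    · exact hab h.symm
    · exact hbc h
  · refine ⟨![b,a,b,b], fun j => by fin_cases j <;> simp, Or.inl ⟨Or.inl rfl, ?_⟩⟩
    simp only [Matrix.cons_val_zero, Matrix.cons_val_one, Matrix.head_cons, Matrix.cons_val_two, Matrix.cons_val_three, Matrix.tail_cons, hr2]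
    rintro (h | h)
    · exact hab h.symm
    · exact hbc h
  · refine ⟨![a,a,b,a], fun j => by fin_cases j <;> simp, Or.inr ⟨Or.inl rfl, ?_⟩⟩
    simp only [Matrix.cons_val_zero, Matrix.cons_val_one, Matrix.head_cons, Matrix.cons_val_two, Matrix.cons_val_three, Matrix.tail_cons, hr4]
    rintro (h | h)
    · exact hab h
    · exact hac h
  · refine ⟨![a,a,a,b], fun j => by fin_cases j <;> simp, Or.inr ⟨Or.inl rfl, ?_⟩⟩
    simp only [Matrix.cons_val_zero, Matrix.cons_val_one, Matrix.head_cons, Matrix.cons_val_two, Matrix.cons_val_three, Matrix.tail_cons, hr3]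
    rintro (h | h)
    · exact hab h
    · exact hac h
end
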